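/- Let (G, G⁺, u) be a partially ordered abelian group with order unit u such that G ≅ G ⊗ ℚ, and let H ≤ G be a singular subgroup satisfying property (2.2). On G₀ = G/H define the quotient cone G₀⁺ = {x + H : ∃ y ∈ H with x + y ∈ G⁺}. Then: G₀⁺ + G₀⁺ ⊆ G₀⁺ and G₀⁺ ∩ (−G₀⁺) = {0}, so (G₀, G₀⁺) is a partially ordered abelian group; u + H is an order unit of (G₀, G₀⁺); the quotient map π : G → G₀ is positive (π(G⁺) ⊆ G₀⁺); and (G₀, G₀⁺) is unperforated: if n ≥ 1 and n·(x + H) ∈ G₀⁺ then x + H ∈ G₀⁺. -/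
import Mathlib


/-- quotient of a ℚ-ordered group with order unit by a singular subgroup
satisfying (2.2), with the quotient cone, is a partially ordered abelian group with
order unit u + H, the quotient map is positive, and the quotient is unperforated. -/
theorem stmt_2 {G : Type*} [AddCommGroup G] [Module ℚ G]
    (Gpos : Set G)
    (hzero : (0 : G) ∈ Gpos)
    (hadd : ∀ a ∈ Gpos, ∀ b ∈ Gpos, a + b ∈ Gpos)
    (hpointed : ∀ a : G, a ∈ Gpos → -a ∈ Gpos → a = 0)
    (hsmul : ∀ q : ℚ, 0 ≤ q → ∀ a ∈ Gpos, q • a ∈ Gpos)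
    (u : G) (hu : u ∈ Gpos)
    (hunit : ∀ x : G, ∃ n : ℕ, n • u - x ∈ Gpos)
    (H : AddSubgroup G)
    (hsing : ∀ a ∈ H, a ∈ Gpos → a = 0)
    (h22 : ∀ k : ℤ, 1 ≤ k → ∀ x : G, k • x ∈ H → x ∈ H)
    (Q : Set (G ⧸ H))
    (hQ : Q = {ξ : G ⧸ H | ∃ x : G, QuotientAddGroup.mk x = ξ ∧ ∃ y ∈ H, x + y ∈ Gpos}) :
    (∀ a ∈ Q, ∀ b ∈ Q, a + b ∈ Q) ∧
    (∀ a : G ⧸ H, a ∈ Q → -a ∈ Q → a = 0) ∧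
    ((QuotientAddGroup.mk u : G ⧸ H) ∈ Q ∧
      ∀ ξ : G ⧸ H, ∃ n : ℕ, n • (QuotientAddGroup.mk u : G ⧸ H) - ξ ∈ Q) ∧
    (∀ x ∈ Gpos, (QuotientAddGroup.mk x : G ⧸ H) ∈ Q) ∧
    (∀ n : ℕ, 1 ≤ n → ∀ ξ : G ⧸ H, n • ξ ∈ Q → ξ ∈ Q) := by
  subst hQ
  refine ⟨?_, ?_, ⟨⟨u, rfl, 0, H.zero_mem, by simpa using hu⟩, ?_⟩, ?_, ?_⟩
  · rintro a ⟨x, rfl, y, hy, hxy⟩ b ⟨x', rfl, y', hy', hxy'⟩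
    refine ⟨x + x', by rw [QuotientAddGroup.mk_add], y + y', H.add_mem hy hy', ?_⟩
    have : x + x' + (y + y') = (x + y) + (x' + y') := by abel
    rw [this]; exact hadd _ hxy _ hxy'
  · rintro a ⟨x, rfl, y, hy, hxy⟩ ⟨x', hx', y', hy', hxy'⟩
    have hxx' : x + x' ∈ H := by
      have : (QuotientAddGroup.mk (x + x') : G ⧸ H) = 0 := by
        rw [QuotientAddGroup.mk_add, hx']; abel
      exact (QuotientAddGroup.eq_zero_iff _).1 this
    have hmem : (x + y) + (x' + y') ∈ H := by
      have : (x + y) + (x' + y') = (x + x') + y + y' := by abel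
      rw [this]; exact H.add_mem (H.add_mem hxx' hy) hy'
    have h0 : (x + y) + (x' + y') = 0 :=
      hsing _ hmem (hadd _ hxy _ hxy')
    have hneg : -(x + y) ∈ Gpos := by
      rw [neg_eq_of_add_eq_zero_right h0]; exact hxy'
    have hxy0 : x + y = 0 := hpointed _ hxy hneg
    have : x ∈ H := by
      rw [eq_neg_of_add_eq_zero_left hxy0]; exact H.neg_mem hy
    exact (QuotientAddGroup.eq_zero_iff _).2 this
  · intro ξ
    obtain ⟨x, rfl⟩ := QuotientAddGroup.mk_surjective ξ
    obtain ⟨n, hn⟩ := hunit x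
    refine ⟨n, n • u - x, ?_, 0, H.zero_mem, by simpa using hn⟩
    simp [QuotientAddGroup.mk_sub]
  · intro x hx
    exact ⟨x, rfl, 0, H.zero_mem, by simpa using hx⟩
  · rintro n hn ξ hξ
    obtain ⟨x, rfl⟩ := QuotientAddGroup.mk_surjective ξ
    obtain ⟨z, hz, y, hy, hzy⟩ := hξ
    have hnx : (QuotientAddGroup.mk (n • x) : G ⧸ H) = n • QuotientAddGroup.mk x := by
      simp
    have hzH : z - n • x ∈ H := by
      have : (QuotientAddGroup.mk (z - (n • x)) : G ⧸ H) = 0 := by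
        rw [QuotientAddGroup.mk_sub, hz, hnx]; abel
      exact (QuotientAddGroup.eq_zero_iff _).1 this
    set w : G := y + (z - n • x) with hw
    have hwH : w ∈ H := H.add_mem hy hzH
    have hpos : n • x + w ∈ Gpos := by
      have : n • x + w = z + y := by rw [hw]; abel
      rw [this]
      have : z + y ∈ Gpos := by
        have e : z + y = z + y := rfl
        exact hzy
      exact this
    have hn0 : (n : ℚ) ≠ 0 := by exact_mod_cast Nat.one_le_iff_ne_zero.mp hn
    have key : ((n : ℚ)⁻¹ • (n • x + w)) = x + (n : ℚ)⁻¹ • w := by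
      rw [smul_add, ← Nat.cast_smul_eq_nsmul ℚ n x, smul_smul, inv_mul_cancel₀ hn0, one_smul]
    have hxv : x + (n : ℚ)⁻¹ • w ∈ Gpos := by
      rw [← key]
      exact hsmul _ (by positivity) _ hpos
    have hvH : (n : ℚ)⁻¹ • w ∈ H := by
      apply h22 (n : ℤ) (by exact_mod_cast hn)
      have : (n : ℤ) • ((n : ℚ)⁻¹ • w) = w := by
        rw [← Int.cast_smul_eq_zsmul ℚ, smul_smul]
        push_cast
        rw [mul_inv_cancel₀ hn0, one_smul]
      rw [this]; exact hwH
    exact ⟨x, rfl, _, hvH, hxv⟩
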